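/- For every integer k, let p = 2^k / (2^k + |1 - 2^k|), where 2^k is the real number given by the integer power. Then p = 1 if and only if k = 0, and if k ≠ 0 then p ≤ 2/3. -/

import Mathlib

theorem stmt_1 (k : ℤ) :
    ((2 : ℝ) ^ k / ((2 : ℝ) ^ k + |1 - (2 : ℝ) ^ k|) = 1 ↔ k = 0) ∧
    (k ≠ 0 → (2 : ℝ) ^ k / ((2 : ℝ) ^ k + |1 - (2 : ℝ) ^ k|) ≤ 2 / 3) := by
  have hpos : (0:ℝ) < (2:ℝ) ^ k := zpow_pos (by norm_num) k
  rcases le_or_gt ((2:ℝ)^k) 1 with h | h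
  · -- 2^k ≤ 1, so |1 - 2^k| = 1 - 2^k, p = 2^k
    have habs : |1 - (2:ℝ)^k| = 1 - (2:ℝ)^k := abs_of_nonneg (by linarith)
    rw [habs]
    have hden : (2:ℝ)^k + (1 - (2:ℝ)^k) = 1 := by ring
    rw [hden, div_one]
    constructor
    · constructor
      · intro h1
        by_contra hk
        rcases lt_or_gt_of_ne hk with hk | hk
        · have : (2:ℝ)^k < (2:ℝ)^(0:ℤ) := zpow_lt_zpow_right₀ (by norm_num) hk
          simp only [zpow_zero] at this; linarith
        · have : (2:ℝ)^(0:ℤ) < (2:ℝ)^k := zpow_lt_zpow_right₀ (by norm_num) hk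
          simp only [zpow_zero] at this; linarith
      · rintro rfl; simp
    · intro hk
      have hk' : k < 0 := by
        rcases lt_or_gt_of_ne hk with hk | hk
        · exact hk
        · exfalso
          have : (2:ℝ)^(0:ℤ) < (2:ℝ)^k := zpow_lt_zpow_right₀ (by norm_num) hk
          simp only [zpow_zero] at this; linarith
      have hle : (2:ℝ)^k ≤ 1/2 := by
        have h3 : (2:ℝ)^k ≤ (2:ℝ)^(-1:ℤ) := zpow_le_zpow_right₀ (by norm_num) (by omega)
        norm_num at h3
        linarith
      linarith
  · -- 2^k > 1, so k > 0, 2^k ≥ 2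
    have habs : |1 - (2:ℝ)^k| = (2:ℝ)^k - 1 := by
      rw [abs_of_nonpos (by linarith)]; ring
    rw [habs]
    have hkpos : 0 < k := by
      by_contra hk
      have : (2:ℝ)^k ≤ (2:ℝ)^(0:ℤ) := zpow_le_zpow_right₀ (by norm_num) (by omega)
      simp only [zpow_zero] at this; linarith
    have h2 : (2:ℝ)^(1:ℤ) ≤ (2:ℝ)^k := zpow_le_zpow_right₀ (by norm_num) hkpos
    have h2' : (2:ℝ) ≤ (2:ℝ)^k := by simpa using h2
    have hden : (0:ℝ) < (2:ℝ)^k + ((2:ℝ)^k - 1) := by linarith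
    constructor
    · constructor
      · intro h1
        rw [div_eq_one_iff_eq (by linarith)] at h1
        linarith
      · rintro rfl; simp at h
    · intro _
      rw [div_le_div_iff₀ hden (by norm_num)]
      linarith
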